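/- Let β ∈ 𝒜 and let c ∈ C_X(𝒜,β) satisfy c_β < 0. Suppose ν ∈ N_β satisfies condition (★) for c, and ν = Σ_{i=1}^k θᵢ ν⁽ⁱ⁾ is a convex combination (k ≥ 2, θᵢ > 0, Σθᵢ = 1) of pairwise non-proportional vectors ν⁽¹⁾,…,ν⁽ᵏ⁾ ∈ N_β such that the map ν̃ ↦ σ_X(−𝒜ν̃) is affine on conv{ν⁽¹⁾,…,ν⁽ᵏ⁾}, i.e. σ_X(−𝒜(Σμᵢν⁽ⁱ⁾)) = Σμᵢ σ_X(−𝒜ν⁽ⁱ⁾) for all μᵢ ≥ 0 with Σμᵢ = 1. Then c is not an edge generator of the cone C_X(𝒜,β). -/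

import Mathlib

open Finset

/-- Dot product on `Fin n → ℝ`. -/
noncomputable def dotp {n : ℕ} (y x : Fin n → ℝ) : ℝ := ∑ i, y i * x i

/-- Support function `σ_X : ℝⁿ → ℝ ∪ {±∞}` of a set `X ⊆ ℝⁿ`. -/
noncomputable def suppFn {n : ℕ} (X : Set (Fin n → ℝ)) (y : Fin n → ℝ) : EReal :=
  ⨆ x ∈ X, ((dotp y x : ℝ) : EReal)

/-- The linear map `𝒜 : ℝ^𝒜 → ℝⁿ`, `ν ↦ Σ_α ν_α α`. -/
noncomputable def Amap {n m : ℕ} (A : Fin m → Fin n → ℝ) (ν : Fin m → ℝ) : Fin n → ℝ :=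
  fun j => ∑ i, ν i * A i j

/-- `N_β = {ν : ν_α ≥ 0 (α ≠ β), Σ ν_α = 0}`. -/
def Nbeta {m : ℕ} (b : Fin m) : Set (Fin m → ℝ) :=
  {ν | (∀ i, i ≠ b → 0 ≤ ν i) ∧ ∑ i, ν i = 0}

/-- Two vectors are proportional if one is a scalar multiple of the other. -/
def Proportional {m : ℕ} (u v : Fin m → ℝ) : Prop :=
  ∃ t : ℝ, u = t • v ∨ v = t • u

/-- The augmented support function `ν ↦ σ_X(-𝒜ν)`. -/
noncomputable def sigA {n m : ℕ} (X : Set (Fin n → ℝ)) (A : Fin m → Fin n → ℝ)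
    (ν : Fin m → ℝ) : EReal :=
  suppFn X (-(Amap A ν))

/-- The map `ν ↦ σ_X(-𝒜ν)` is affine on the segment `[ν1, ν2]`. -/
def SigmaAffineOnSeg {n m : ℕ} (X : Set (Fin n → ℝ)) (A : Fin m → Fin n → ℝ)
    (ν1 ν2 : Fin m → ℝ) : Prop :=
  ∀ t : ℝ, t ∈ Set.Icc (0:ℝ) 1 →
    sigA X A (t • ν1 + (1 - t) • ν2) =
      (t : EReal) * sigA X A ν1 + ((1 - t : ℝ) : EReal) * sigA X A ν2

/-- `ν` is an `X`-circuit of `𝒜` (with negative index allowed only at `b`). -/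
def IsXCircuit {n m : ℕ} (X : Set (Fin n → ℝ)) (A : Fin m → Fin n → ℝ)
    (b : Fin m) (ν : Fin m → ℝ) : Prop :=
  ν ∈ Nbeta b ∧ ν ≠ 0 ∧ sigA X A ν < ⊤ ∧
  ¬ ∃ (ν1 ν2 : Fin m → ℝ) (θ : ℝ), ν1 ∈ Nbeta b ∧ ν2 ∈ Nbeta b ∧
      ¬ Proportional ν1 ν2 ∧ θ ∈ Set.Ioo (0:ℝ) 1 ∧
      ν = θ • ν1 + (1 - θ) • ν2 ∧ SigmaAffineOnSeg X A ν1 ν2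

/-- All finite nonnegative combinations of elements of `S` (including `0`). -/
def coneHull {E : Type*} [AddCommMonoid E] [SMul ℝ E] (S : Set E) : Set E :=
  {x | ∃ (k : ℕ) (t : Fin k → ℝ) (v : Fin k → E),
    (∀ j, 0 ≤ t j) ∧ (∀ j, v j ∈ S) ∧ x = ∑ j, t j • v j}

/-- `v` is an edge generator of the convex cone `K`. -/
def IsEdgeGenerator {E : Type*} [AddCommMonoid E] [SMul ℝ E] (K : Set E) (v : E) : Prop :=
  v ≠ 0 ∧ v ∈ K ∧ ∀ u ∈ K, ∀ w ∈ K, v = u + w →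
    (∃ a : ℝ, 0 ≤ a ∧ u = a • v) ∧ (∃ b : ℝ, 0 ≤ b ∧ w = b • v)

/-- The `X`-AGE cone `C_X(𝒜, β)`, as a cone of coefficient vectors. -/
def AgeCone {n m : ℕ} (X : Set (Fin n → ℝ)) (A : Fin m → Fin n → ℝ) (b : Fin m) :
    Set (Fin m → ℝ) :=
  {c | (∀ i, i ≠ b → 0 ≤ c i) ∧ ∀ x ∈ X, 0 ≤ ∑ i, c i * Real.exp (dotp (A i) x)}

/-- The `X`-SAGE cone `C_X(𝒜) = Σ_β C_X(𝒜, β)`. -/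
def Sage {n m : ℕ} (X : Set (Fin n → ℝ)) (A : Fin m → Fin n → ℝ) : Set (Fin m → ℝ) :=
  {c | ∃ f : Fin m → (Fin m → ℝ), (∀ b, f b ∈ AgeCone X A b) ∧ c = ∑ b, f b}

/-- One summand of the relative entropy, with the conventions `0·log 0 = 0` and
`D = ∞` if `a > 0` while `c ≤ 0`. -/
noncomputable def relEnt (a c : ℝ) : EReal :=
  if a = 0 then 0 else if 0 < c then ((a * Real.log (a / c) : ℝ) : EReal) else ⊤

/-- The relative entropy `D(ν_{∖β}, e · c_{∖β})`. -/
noncomputable def relEntSum {m : ℕ} (b : Fin m) (ν c : Fin m → ℝ) : EReal :=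
  ∑ i ∈ Finset.univ.erase b, relEnt (ν i) (Real.exp 1 * c i)

/-- Condition (★): `ν ∈ N_β`, `ν ≠ 0`, `σ_X(-𝒜ν) + D(ν_{∖β}, e c_{∖β}) ≤ c_β`. -/
def StarCond {n m : ℕ} (X : Set (Fin n → ℝ)) (A : Fin m → Fin n → ℝ)
    (b : Fin m) (c ν : Fin m → ℝ) : Prop :=
  ν ∈ Nbeta b ∧ ν ≠ 0 ∧ sigA X A ν + relEntSum b ν c ≤ (c b : EReal)

/-- The `λ`-witnessed AGE cone `C_X(𝒜, λ)` for a normalized `λ` with `λ_β = -1`. -/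
noncomputable def WitnessCone {n m : ℕ} (X : Set (Fin n → ℝ)) (A : Fin m → Fin n → ℝ)
    (b : Fin m) (l : Fin m → ℝ) : Set (Fin m → ℝ) :=
  {c | (∀ i, i ≠ b → 0 ≤ c i) ∧
    (-(c b)) * Real.exp ((sigA X A l).toReal) ≤
      ∏ i ∈ Finset.univ.filter (fun i => 0 < l i), (c i / l i) ^ (l i)}

/-- Normalized `X`-circuits in `N_β`. -/
def LambdaB {n m : ℕ} (X : Set (Fin n → ℝ)) (A : Fin m → Fin n → ℝ) (b : Fin m) :
    Set (Fin m → ℝ) :=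
  {l | IsXCircuit X A b l ∧ l b = -1}

/-- All normalized `X`-circuits of `𝒜`. -/
def Lambda {n m : ℕ} (X : Set (Fin n → ℝ)) (A : Fin m → Fin n → ℝ) : Set (Fin m → ℝ) :=
  ⋃ b, LambdaB X A b

/-- Functional form `φ_λ = (λ, σ_X(-𝒜λ)) ∈ ℝ^𝒜 × ℝ`. -/
noncomputable def phiVec {n m : ℕ} (X : Set (Fin n → ℝ)) (A : Fin m → Fin n → ℝ)
    (l : Fin m → ℝ) : (Fin m → ℝ) × ℝ :=
  (l, (sigA X A l).toReal)

/-- Functional form as an affine function `φ_λ(y) = Σ y_α λ_α + σ_X(-𝒜λ)`. -/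
noncomputable def phiFun {n m : ℕ} (X : Set (Fin n → ℝ)) (A : Fin m → Fin n → ℝ)
    (l : Fin m → ℝ) (y : Fin m → ℝ) : ℝ :=
  (∑ i, y i * l i) + (sigA X A l).toReal

/-- The circuit graph `G_X(𝒜)`. -/
noncomputable def circuitGraph {n m : ℕ} (X : Set (Fin n → ℝ)) (A : Fin m → Fin n → ℝ) :
    Set ((Fin m → ℝ) × ℝ) :=
  coneHull ((phiVec X A '' Lambda X A) ∪ {((0 : Fin m → ℝ), (1 : ℝ))})

/-- The reduced normalized `X`-circuits `Λ*_X(𝒜)`. -/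
noncomputable def LambdaStar {n m : ℕ} (X : Set (Fin n → ℝ)) (A : Fin m → Fin n → ℝ) :
    Set (Fin m → ℝ) :=
  {l | l ∈ Lambda X A ∧ IsEdgeGenerator (circuitGraph X A) (phiVec X A l)}

/-- `λ`-witnessed AGE cone for a normalized circuit, with `β` recovered from `λ`. -/
noncomputable def WitnessConeL {n m : ℕ} (X : Set (Fin n → ℝ)) (A : Fin m → Fin n → ℝ)
    (l : Fin m → ℝ) : Set (Fin m → ℝ) :=
  ⋃ b ∈ {b : Fin m | l b = -1}, WitnessCone X A b l

/-- Dual cone of a set of coefficient vectors in `ℝ^𝒜`. -/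
def dualConeV {m : ℕ} (K : Set (Fin m → ℝ)) : Set (Fin m → ℝ) :=
  {v | ∀ c ∈ K, 0 ≤ ∑ i, v i * c i}

/-- Dual cone of a subset of `ℝ^𝒜 × ℝ`. -/
def dualConeP {m : ℕ} (K : Set ((Fin m → ℝ) × ℝ)) : Set ((Fin m → ℝ) × ℝ) :=
  {p | ∀ q ∈ K, 0 ≤ (∑ i, p.1 i * q.1 i) + p.2 * q.2}

/-- The basis functions `x ↦ exp(αᵀx)`, `α ∈ 𝒜`, are linearly independent on `X`. -/
def ExpLinIndep {n m : ℕ} (X : Set (Fin n → ℝ)) (A : Fin m → Fin n → ℝ) : Prop :=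
  LinearIndependent ℝ (fun i : Fin m => fun x : X => Real.exp (dotp (A i) (x : Fin n → ℝ)))

/-- `X` is a polyhedron: an intersection of finitely many closed halfspaces. -/
def IsPolyhedron {n : ℕ} (X : Set (Fin n → ℝ)) : Prop :=
  ∃ (k : ℕ) (a : Fin k → Fin n → ℝ) (bb : Fin k → ℝ),
    X = {x | ∀ i, dotp (a i) x ≤ bb i}

/-- Minkowski sum `Σ_{l ∈ Λ} C(l)` (finite sums, one summand per `l`;
the empty sum gives `{0}`). -/
def MinkSumOver {m : ℕ} (Λ : Set (Fin m → ℝ)) (C : (Fin m → ℝ) → Set (Fin m → ℝ)) :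
    Set (Fin m → ℝ) :=
  {c | ∃ (s : Finset (Fin m → ℝ)) (f : (Fin m → ℝ) → (Fin m → ℝ)),
    (↑s ⊆ Λ) ∧ (∀ l ∈ s, f l ∈ C l) ∧ c = ∑ l ∈ s, f l}


section Helpers

lemma ecoe_sum {ι : Type*} (s : Finset ι) (f : ι → ℝ) :
    ((∑ i ∈ s, f i : ℝ) : EReal) = ∑ i ∈ s, (f i : EReal) :=
  map_sum (⟨⟨Real.toEReal, rfl⟩, fun x y => EReal.coe_add x y⟩ : ℝ →+ EReal) f s

lemma esum_ne_bot {ι : Type*} (s : Finset ι) (f : ι → EReal) (h : ∀ i ∈ s, f i ≠ ⊥) :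
    ∑ i ∈ s, f i ≠ ⊥ := by
  classical
  induction s using Finset.induction_on with
  | empty => simp
  | insert a t hx ih =>
    rw [Finset.sum_insert hx, Ne, EReal.add_eq_bot_iff]
    push_neg
    exact ⟨h a (Finset.mem_insert_self a t), ih fun i hi => h i (Finset.mem_insert_of_mem hi)⟩

lemma esum_term_ne_top {ι : Type*} (s : Finset ι) (f : ι → EReal)
    (hb : ∀ i ∈ s, f i ≠ ⊥) (ht : ∑ i ∈ s, f i ≠ ⊤) : ∀ i ∈ s, f i ≠ ⊤ := by
  classical
  intro i hi hcon
  apply ht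
  rw [← Finset.add_sum_erase s f hi, hcon]
  exact EReal.top_add_of_ne_bot (esum_ne_bot _ _ fun j hj => hb j (Finset.mem_of_mem_erase hj))

lemma fy (cc nv s : ℝ) (hcc : 0 ≤ cc) (hn : 0 ≤ nv) (himp : 0 < nv → 0 < cc) :
    nv * s - nv * Real.log (nv / (Real.exp 1 * cc)) ≤ cc * Real.exp s := by
  rcases eq_or_lt_of_le hn with h0 | h0
  · rw [← h0]; simpa using mul_nonneg hcc (Real.exp_pos s).le
  · have hc : 0 < cc := himp h0
    have key : s - Real.log (nv / cc) + 1 ≤ Real.exp (s - Real.log (nv / cc)) :=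
      Real.add_one_le_exp _
    have he : cc * Real.exp s = nv * Real.exp (s - Real.log (nv / cc)) := by
      rw [Real.exp_sub, Real.exp_log (by positivity)]
      field_simp
    have hlog : Real.log (nv / (Real.exp 1 * cc)) = Real.log (nv / cc) - 1 := by
      rw [div_mul_eq_div_div, Real.log_div (by positivity) hc.ne',
        Real.log_div h0.ne' (Real.exp_ne_zero 1), Real.log_exp,
        Real.log_div h0.ne' hc.ne']
      ring
    rw [he, hlog]
    have := mul_le_mul_of_nonneg_left key hn
    nlinarith [this]

lemma relEnt_ne_bot (a c : ℝ) : relEnt a c ≠ ⊥ := by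
  unfold relEnt
  split_ifs
  · simp
  · exact EReal.coe_ne_bot _
  · simp

lemma emul_ne_bot {t : ℝ} (ht : 0 < t) {x : EReal} (hx : x ≠ ⊥) : (t : EReal) * x ≠ ⊥ := by
  induction x with
  | bot => exact absurd rfl hx
  | coe r => rw [← EReal.coe_mul]; exact EReal.coe_ne_bot _
  | top => rw [EReal.coe_mul_top_of_pos ht]; simp

lemma dotp_Amap {n m : ℕ} (A : Fin m → Fin n → ℝ) (y : Fin m → ℝ) (x : Fin n → ℝ) :
    dotp (Amap A y) x = ∑ i, y i * dotp (A i) x := by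
  unfold dotp Amap
  simp only [Finset.sum_mul, Finset.mul_sum]
  rw [Finset.sum_comm]
  congr 1; ext i
  congr 1; ext j
  ring

lemma dotp_neg {n : ℕ} (y x : Fin n → ℝ) : dotp (-y) x = -dotp y x := by
  unfold dotp
  rw [← Finset.sum_neg_distrib]
  congr 1; ext i; simp

lemma sigA_lb {n m : ℕ} {X : Set (Fin n → ℝ)} (A : Fin m → Fin n → ℝ) (y : Fin m → ℝ)
    {x : Fin n → ℝ} (hx : x ∈ X) :
    ((dotp (-(Amap A y)) x : ℝ) : EReal) ≤ sigA X A y := by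
  unfold sigA suppFn
  exact le_iSup₂ (f := fun x (_ : x ∈ X) => ((dotp (-(Amap A y)) x : ℝ) : EReal)) x hx

lemma decomp {n m : ℕ} (X : Set (Fin n → ℝ)) (hXne : X.Nonempty)
    (A : Fin m → Fin n → ℝ) (b : Fin m) (c ν : Fin m → ℝ)
    (hc : c ∈ AgeCone X A b)
    (hstar : StarCond X A b c ν)
    {k : ℕ} (θ : Fin k → ℝ) (νs : Fin k → Fin m → ℝ)
    (hθpos : ∀ i, 0 < θ i) (hθsum : ∑ i, θ i = 1)
    (hmem : ∀ i, νs i ∈ Nbeta b)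
    (hcomb : ν = ∑ i, θ i • νs i)
    (haff : ∀ μ : Fin k → ℝ, (∀ i, 0 ≤ μ i) → ∑ i, μ i = 1 →
      sigA X A (∑ i, μ i • νs i) = ∑ i, ((μ i : ℝ) : EReal) * sigA X A (νs i))
    (i0 : Fin k) :
    ∃ u w : Fin m → ℝ, u ∈ AgeCone X A b ∧ w ∈ AgeCone X A b ∧ c = u + w ∧
      ∀ a : ℝ, u = a • c → θ i0 • νs i0 = a • ν := by
  classical
  obtain ⟨x₀, hx₀⟩ := hXne
  -- basic pointwise facts
  have hνpt : ∀ i, ν i = ∑ j, θ j * νs j i := by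
    intro i; rw [hcomb]; simp [Finset.sum_apply]
  have hνnn : ∀ i, i ≠ b → 0 ≤ ν i := hstar.1.1
  have hcnn : ∀ i, i ≠ b → 0 ≤ c i := hc.1
  have hν0 : ∀ i, i ≠ b → ν i = 0 → ∀ j, νs j i = 0 := by
    intro i hib h0 j
    have hz : ∀ l ∈ (Finset.univ : Finset (Fin k)), 0 ≤ θ l * νs l i :=
      fun l _ => mul_nonneg (hθpos l).le ((hmem l).1 i hib)
    have := (Finset.sum_eq_zero_iff_of_nonneg hz).mp (by rw [← hνpt i, h0]) j (Finset.mem_univ j)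
    have hθj := (hθpos j).ne'
    exact by nlinarith [this, hθpos j, (hmem j).1 i hib]
  have hρnn : ∀ i, i ≠ b → θ i0 * νs i0 i ≤ ν i := by
    intro i hib
    rw [hνpt i]
    exact Finset.single_le_sum (f := fun j => θ j * νs j i)
      (fun l _ => mul_nonneg (hθpos l).le ((hmem l).1 i hib)) (Finset.mem_univ i0)
  have hθ1 : θ i0 ≤ 1 := by
    rw [← hθsum]
    exact Finset.single_le_sum (fun l _ => (hθpos l).le) (Finset.mem_univ i0)
  -- finiteness of sigA ν and relEntSum
  have hsb : ∀ y : Fin m → ℝ, sigA X A y ≠ ⊥ := by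
    intro y hbot
    have := sigA_lb A y hx₀
    rw [hbot, le_bot_iff] at this
    exact EReal.coe_ne_bot _ this
  have hstar2 : sigA X A ν + relEntSum b ν c ≤ ((c b : ℝ) : EReal) := hstar.2.2
  have hDnb : relEntSum b ν c ≠ ⊥ :=
    esum_ne_bot _ _ (fun i _ => relEnt_ne_bot _ _)
  have hsum_ne_top : sigA X A ν + relEntSum b ν c ≠ ⊤ :=
    ne_top_of_le_ne_top (EReal.coe_ne_top _) hstar2
  have hSnt : sigA X A ν ≠ ⊤ := by
    intro h
    rw [h, EReal.top_add_of_ne_bot hDnb] at hsum_ne_top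
    exact hsum_ne_top rfl
  have hDnt : relEntSum b ν c ≠ ⊤ := by
    intro h
    rw [h, add_comm, EReal.top_add_of_ne_bot (hsb ν)] at hsum_ne_top
    exact hsum_ne_top rfl
  set Sr : ℝ := (sigA X A ν).toReal with hSrdef
  have hSr : sigA X A ν = ((Sr : ℝ) : EReal) := (EReal.coe_toReal hSnt (hsb ν)).symm
  -- relative entropy terms
  have htermnt : ∀ i ∈ Finset.univ.erase b, relEnt (ν i) (Real.exp 1 * c i) ≠ ⊤ :=
    esum_term_ne_top _ _ (fun i _ => relEnt_ne_bot _ _) hDnt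
  have hcpos : ∀ i, i ≠ b → ν i ≠ 0 → 0 < c i := by
    intro i hib hνi
    have hmem' : i ∈ Finset.univ.erase b := Finset.mem_erase.mpr ⟨hib, Finset.mem_univ i⟩
    have := htermnt i hmem'
    unfold relEnt at this
    rw [if_neg hνi] at this
    by_contra hci
    push_neg at hci
    rw [if_neg (by nlinarith [Real.exp_pos 1])] at this
    exact this rfl
  set L : Fin m → ℝ := fun i => Real.log (ν i / (Real.exp 1 * c i)) with hLdef
  have hrelval : ∀ i ∈ Finset.univ.erase b,
      relEnt (ν i) (Real.exp 1 * c i) = ((ν i * L i : ℝ) : EReal) := by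
    intro i hi
    obtain ⟨hib, -⟩ := Finset.mem_erase.mp hi
    unfold relEnt
    by_cases h0 : ν i = 0
    · rw [if_pos h0, h0]; norm_num
    · rw [if_neg h0, if_pos (by nlinarith [hcpos i hib h0, Real.exp_pos 1])]
  set Dr : ℝ := ∑ i ∈ Finset.univ.erase b, ν i * L i with hDrdef
  have hDr : relEntSum b ν c = ((Dr : ℝ) : EReal) := by
    unfold relEntSum
    rw [Finset.sum_congr rfl hrelval, hDrdef, ecoe_sum]
  have hkey : Sr + Dr ≤ c b := by
    have := hstar2
    rw [hSr, hDr, ← EReal.coe_add, EReal.coe_le_coe_iff] at this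
    exact this
  -- finiteness of each sigA (νs i)
  have haffθ : ((Sr : ℝ) : EReal) = ∑ i, ((θ i : ℝ) : EReal) * sigA X A (νs i) := by
    rw [← hSr, ← haff θ (fun i => (hθpos i).le) hθsum, ← hcomb]
  have htnb : ∀ i ∈ (Finset.univ : Finset (Fin k)),
      ((θ i : ℝ) : EReal) * sigA X A (νs i) ≠ ⊥ :=
    fun i _ => emul_ne_bot (hθpos i) (hsb _)
  have hσnt : ∀ i, sigA X A (νs i) ≠ ⊤ := by
    intro i hi
    have := esum_term_ne_top _ _ htnb (by rw [← haffθ]; exact EReal.coe_ne_top _)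
      i (Finset.mem_univ i)
    rw [hi, EReal.coe_mul_top_of_pos (hθpos i)] at this
    exact this rfl
  set σ : Fin k → ℝ := fun i => (sigA X A (νs i)).toReal with hσdef
  have hσ : ∀ i, sigA X A (νs i) = ((σ i : ℝ) : EReal) :=
    fun i => (EReal.coe_toReal (hσnt i) (hsb _)).symm
  have hSrval : Sr = ∑ i, θ i * σ i := by
    have : ((Sr : ℝ) : EReal) = ((∑ i, θ i * σ i : ℝ) : EReal) := by
      rw [haffθ, ecoe_sum]
      exact Finset.sum_congr rfl fun i _ => by rw [hσ i, ← EReal.coe_mul]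
    exact EReal.coe_eq_coe_iff.mp this
  -- real support bounds
  have hsupp : ∀ i, ∀ x ∈ X, -dotp (Amap A (νs i)) x ≤ σ i := by
    intro i x hx
    have := sigA_lb A (νs i) hx
    rw [hσ i, dotp_neg, EReal.coe_le_coe_iff] at this
    exact this
  have hsuppν : ∀ x ∈ X, -dotp (Amap A ν) x ≤ Sr := by
    intro x hx
    have := sigA_lb A ν hx
    rw [hSr, dotp_neg, EReal.coe_le_coe_iff] at this
    exact this
  -- the construction
  set θ0 := θ i0 with hθ0def
  set μ := νs i0 with hμdef
  have hδ : 0 ≤ c b - Sr - Dr := by linarith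
  set ub : ℝ := θ0 * σ i0 + (∑ j ∈ Finset.univ.erase b, θ0 * μ j * L j)
      + θ0 * (c b - Sr - Dr) with hubdef
  set u : Fin m → ℝ := fun i => if i = b then ub
      else if ν i = 0 then θ0 * c i else c i * (θ0 * μ i) / ν i with hudef
  have hub : u b = ub := by simp [hudef]
  have hui : ∀ i, i ≠ b → ν i ≠ 0 → u i = c i * (θ0 * μ i) / ν i := by
    intro i h1 h2; simp [hudef, h1, h2]
  have hui0 : ∀ i, i ≠ b → ν i = 0 → u i = θ0 * c i := by
    intro i h1 h2; simp [hudef, h1, h2]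
  -- the master membership criterion
  have main : ∀ (g ρ : Fin m → ℝ) (B : ℝ),
      (∀ i, i ≠ b → 0 ≤ g i) →
      (∀ i, i ≠ b → 0 ≤ ρ i) →
      (∀ i, i ≠ b → 0 < ρ i → 0 < g i) →
      (∀ i, i ≠ b → 0 < ρ i → Real.log (ρ i / (Real.exp 1 * g i)) = L i) →
      (∑ i, ρ i = 0) →
      (∀ x ∈ X, -dotp (Amap A ρ) x ≤ B) →
      (B + ∑ i ∈ Finset.univ.erase b, ρ i * L i ≤ g b) →
      g ∈ AgeCone X A b := by
    intro g ρ B hg hρ himp hlog hρsum hB hbound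
    refine ⟨hg, fun x hx => ?_⟩
    set d : Fin m → ℝ := fun i => dotp (A i) x with hddef
    have hterm : ∀ i ∈ Finset.univ.erase b,
        ρ i * (d i - d b) - ρ i * L i ≤ g i * Real.exp (d i - d b) := by
      intro i hi
      obtain ⟨hib, -⟩ := Finset.mem_erase.mp hi
      have h1 := fy (g i) (ρ i) (d i - d b) (hg i hib) (hρ i hib) (himp i hib)
      rcases eq_or_lt_of_le (hρ i hib) with h0 | h0
      · rw [← h0]
        simpa using mul_nonneg (hg i hib) (Real.exp_pos _).le
      · rwa [hlog i hib h0] at h1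
    have hsum1 : ∑ i ∈ Finset.univ.erase b, (ρ i * (d i - d b) - ρ i * L i)
        ≤ ∑ i ∈ Finset.univ.erase b, g i * Real.exp (d i - d b) :=
      Finset.sum_le_sum hterm
    have hρbsum : ∑ i ∈ Finset.univ.erase b, ρ i = - ρ b := by
      rw [Finset.sum_erase_eq_sub (Finset.mem_univ b), hρsum]; ring
    have hlhs : ∑ i ∈ Finset.univ.erase b, (ρ i * (d i - d b) - ρ i * L i)
        = dotp (Amap A ρ) x - ∑ i ∈ Finset.univ.erase b, ρ i * L i := by
      rw [dotp_Amap]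
      have e1 : ∀ i ∈ Finset.univ.erase b, ρ i * (d i - d b) - ρ i * L i
          = (ρ i * d i - ρ i * L i) - ρ i * d b := fun i _ => by ring
      rw [Finset.sum_congr rfl e1, Finset.sum_sub_distrib, Finset.sum_sub_distrib,
        ← Finset.sum_mul, hρbsum, Finset.sum_erase_eq_sub (Finset.mem_univ b)]
      have e2 : ∀ i ∈ (Finset.univ : Finset (Fin m)), ρ i * dotp (A i) x = ρ i * d i :=
        fun i _ => rfl
      rw [Finset.sum_congr rfl e2]
      ring
    rw [hlhs] at hsum1
    have hBx := hB x hx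
    have hfin : 0 ≤ (∑ i ∈ Finset.univ.erase b, g i * Real.exp (d i - d b) + g b) := by
      linarith
    calc (0:ℝ) ≤ (∑ i ∈ Finset.univ.erase b, g i * Real.exp (d i - d b) + g b)
          * Real.exp (d b) := mul_nonneg hfin (Real.exp_pos _).le
      _ = ∑ i ∈ Finset.univ.erase b, g i * Real.exp (d i) + g b * Real.exp (d b) := by
          rw [add_mul, Finset.sum_mul]
          congr 1
          exact Finset.sum_congr rfl fun i _ => by
            rw [mul_assoc, ← Real.exp_add, show d i - d b + d b = d i by ring]
      _ = ∑ i, g i * Real.exp (dotp (A i) x) := by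
          exact Finset.sum_erase_add _ _ (Finset.mem_univ b)
  -- u belongs to the AGE cone
  have hmemu : u ∈ AgeCone X A b := by
    apply main u (fun i => θ0 * μ i) (θ0 * σ i0)
    · intro i hib
      by_cases h0 : ν i = 0
      · rw [hui0 i hib h0]
        exact mul_nonneg (hθpos i0).le (hcnn i hib)
      · rw [hui i hib h0]
        exact div_nonneg (mul_nonneg (hcnn i hib)
          (mul_nonneg (hθpos i0).le ((hmem i0).1 i hib))) (hνnn i hib)
    · intro i hib
      exact mul_nonneg (hθpos i0).le ((hmem i0).1 i hib)
    · intro i hib hpos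
      try dsimp only at hpos
      have hν : 0 < ν i := lt_of_lt_of_le hpos (hρnn i hib)
      rw [hui i hib hν.ne']
      exact div_pos (mul_pos (hcpos i hib hν.ne') hpos) hν
    · intro i hib hpos
      try dsimp only at hpos ⊢
      have hν : 0 < ν i := lt_of_lt_of_le hpos (hρnn i hib)
      have hci := hcpos i hib hν.ne'
      have hupos : 0 < c i * (θ0 * μ i) / ν i := div_pos (mul_pos hci hpos) hν
      rw [hui i hib hν.ne']
      rw [hLdef]
      congr 1
      rw [div_eq_div_iff (mul_pos (Real.exp_pos 1) hupos).ne'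
        (mul_pos (Real.exp_pos 1) hci).ne']
      field_simp
    · try dsimp only
      rw [← Finset.mul_sum, (hmem i0).2, mul_zero]
    · intro x hx
      have h1 : dotp (Amap A fun i => θ0 * μ i) x = θ0 * dotp (Amap A μ) x := by
        rw [dotp_Amap, dotp_Amap, Finset.mul_sum]
        exact Finset.sum_congr rfl fun i _ => by ring
      rw [h1]
      nlinarith [hsupp i0 x hx, hθpos i0]
    · try dsimp only
      rw [hub, hubdef]
      have h2 : 0 ≤ θ0 * (c b - Sr - Dr) := mul_nonneg (hθpos i0).le hδ
      linarith
  -- w := c - u belongs to the AGE cone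
  set w : Fin m → ℝ := fun i => c i - u i with hwdef
  have hcw : c = u + w := by
    funext i; simp [hwdef]
  have hwi : ∀ i, i ≠ b → ν i ≠ 0 → w i = c i * (ν i - θ0 * μ i) / ν i := by
    intro i h1 h2
    rw [hwdef]
    try dsimp only
    rw [hui i h1 h2]
    field_simp
  have hwi0 : ∀ i, i ≠ b → ν i = 0 → w i = (1 - θ0) * c i := by
    intro i h1 h2
    rw [hwdef]
    try dsimp only
    rw [hui0 i h1 h2]
    ring
  have hwb : w b = c b - ub := by simp [hwdef, hub]
  have hmemw : w ∈ AgeCone X A b := by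
    apply main w (fun i => ν i - θ0 * μ i) (Sr - θ0 * σ i0)
    · intro i hib
      by_cases h0 : ν i = 0
      · rw [hwi0 i hib h0]
        exact mul_nonneg (by linarith) (hcnn i hib)
      · rw [hwi i hib h0]
        exact div_nonneg (mul_nonneg (hcnn i hib) (by linarith [hρnn i hib])) (hνnn i hib)
    · intro i hib
      try dsimp only
      linarith [hρnn i hib]
    · intro i hib hpos
      try dsimp only at hpos
      have hμnn : 0 ≤ θ0 * μ i := mul_nonneg (hθpos i0).le ((hmem i0).1 i hib)
      have hν : 0 < ν i := by linarith
      rw [hwi i hib hν.ne']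
      exact div_pos (mul_pos (hcpos i hib hν.ne') (by linarith)) hν
    · intro i hib hpos
      try dsimp only at hpos ⊢
      have hμnn : 0 ≤ θ0 * μ i := mul_nonneg (hθpos i0).le ((hmem i0).1 i hib)
      have hν : 0 < ν i := by linarith
      have hci := hcpos i hib hν.ne'
      have hwpos : 0 < c i * (ν i - θ0 * μ i) / ν i :=
        div_pos (mul_pos hci (by linarith)) hν
      rw [hwi i hib hν.ne']
      rw [hLdef]
      congr 1
      rw [div_eq_div_iff (mul_pos (Real.exp_pos 1) hwpos).ne'
        (mul_pos (Real.exp_pos 1) hci).ne']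
      field_simp
    · try dsimp only
      rw [Finset.sum_sub_distrib, hstar.1.2, ← Finset.mul_sum, (hmem i0).2, mul_zero]
      ring
    · intro x hx
      have hρw : ∀ i, (ν i - θ0 * μ i) = ∑ j ∈ Finset.univ.erase i0, θ j * νs j i := by
        intro i
        rw [Finset.sum_erase_eq_sub (Finset.mem_univ i0), ← hνpt i]
      have h1 : dotp (Amap A fun i => ν i - θ0 * μ i) x
          = ∑ j ∈ Finset.univ.erase i0, θ j * dotp (Amap A (νs j)) x := by
        rw [dotp_Amap]
        have e1 : ∀ i ∈ (Finset.univ : Finset (Fin m)), (ν i - θ0 * μ i) * dotp (A i) x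
            = ∑ j ∈ Finset.univ.erase i0, θ j * (νs j i * dotp (A i) x) := by
          intro i _
          rw [hρw i, Finset.sum_mul]
          exact Finset.sum_congr rfl fun j _ => by ring
        rw [Finset.sum_congr rfl e1, Finset.sum_comm]
        exact Finset.sum_congr rfl fun j _ => by rw [dotp_Amap, Finset.mul_sum]
      rw [h1]
      have h2 : ∀ j ∈ Finset.univ.erase i0, -(θ j * dotp (Amap A (νs j)) x) ≤ θ j * σ j :=
        fun j _ => by nlinarith [hsupp j x hx, (hθpos j).le]
      calc -(∑ j ∈ Finset.univ.erase i0, θ j * dotp (Amap A (νs j)) x)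
          = ∑ j ∈ Finset.univ.erase i0, -(θ j * dotp (Amap A (νs j)) x) := by
            rw [← Finset.sum_neg_distrib]
        _ ≤ ∑ j ∈ Finset.univ.erase i0, θ j * σ j := Finset.sum_le_sum h2
        _ = Sr - θ0 * σ i0 := by
            rw [Finset.sum_erase_eq_sub (Finset.mem_univ i0), ← hSrval]
    · try dsimp only
      rw [hwb, hubdef]
      have e3 : ∑ i ∈ Finset.univ.erase b, (ν i - θ0 * μ i) * L i
          = Dr - ∑ j ∈ Finset.univ.erase b, θ0 * μ j * L j := by
        rw [hDrdef, ← Finset.sum_sub_distrib]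
        exact Finset.sum_congr rfl fun i _ => by ring
      rw [e3]
      nlinarith [hδ, hθ1, mul_nonneg (sub_nonneg.mpr hθ1) hδ]
  -- the proportionality property
  refine ⟨u, w, hmemu, hmemw, hcw, ?_⟩
  intro a ha
  have haf : ∀ i, u i = a * c i := fun i => by rw [ha]; simp
  have hpt : ∀ i, i ≠ b → θ0 * μ i = a * ν i := by
    intro i hib
    by_cases h0 : ν i = 0
    · rw [h0, hμdef, hν0 i hib h0 i0]
      ring
    · have hci := hcpos i hib h0
      have h1 := haf i
      rw [hui i hib h0, div_eq_iff h0] at h1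
      have h3 : c i * (θ0 * μ i) = c i * (a * ν i) := by linear_combination h1
      exact mul_left_cancel₀ hci.ne' h3
  funext i
  simp only [Pi.smul_apply, smul_eq_mul]
  by_cases hib : i = b
  · subst hib
    have hμb : μ i = -∑ j ∈ Finset.univ.erase i, μ j := by
      rw [Finset.sum_erase_eq_sub (Finset.mem_univ i), (hmem i0).2]; ring
    have hνb : ν i = -∑ j ∈ Finset.univ.erase i, ν j := by
      rw [Finset.sum_erase_eq_sub (Finset.mem_univ i), hstar.1.2]; ring
    rw [hμb, hνb, mul_neg, mul_neg, Finset.mul_sum, Finset.mul_sum]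
    congr 1
    exact Finset.sum_congr rfl fun j hj => hpt j (Finset.mem_erase.mp hj).1
  · exact hpt i hib


end Helpers

theorem statement3 {n m : ℕ} (X : Set (Fin n → ℝ)) (hXne : X.Nonempty) (hXcl : IsClosed X)
    (hXcv : Convex ℝ X) (A : Fin m → Fin n → ℝ) (hA : Function.Injective A) (hm : 0 < m)
    (b : Fin m) (c ν : Fin m → ℝ)
    (hc : c ∈ AgeCone X A b) (hcb : c b < 0)
    (hstar : StarCond X A b c ν)
    (k : ℕ) (hk : 2 ≤ k) (θ : Fin k → ℝ) (νs : Fin k → Fin m → ℝ)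
    (hθpos : ∀ i, 0 < θ i) (hθsum : ∑ i, θ i = 1)
    (hmem : ∀ i, νs i ∈ Nbeta b)
    (hnp : ∀ i j, i ≠ j → ¬ Proportional (νs i) (νs j))
    (hcomb : ν = ∑ i, θ i • νs i)
    (haff : ∀ μ : Fin k → ℝ, (∀ i, 0 ≤ μ i) → ∑ i, μ i = 1 →
      sigA X A (∑ i, μ i • νs i) = ∑ i, ((μ i : ℝ) : EReal) * sigA X A (νs i)) :
    ¬ IsEdgeGenerator (AgeCone X A b) c := by
  intro hedge
  have hi0lt : (0 : ℕ) < k := by omega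
  have hi1lt : (1 : ℕ) < k := by omega
  set i0 : Fin k := ⟨0, hi0lt⟩ with hi0def
  set i1 : Fin k := ⟨1, hi1lt⟩ with hi1def
  have hne : i0 ≠ i1 := Fin.ne_of_val_ne (by norm_num)
  obtain ⟨u0, w0, hu0, hw0, hcw0, hP0⟩ :=
    decomp X hXne A b c ν hc hstar θ νs hθpos hθsum hmem hcomb haff i0
  obtain ⟨⟨a0, ha0nn, ha0⟩, -⟩ := hedge.2.2 u0 hu0 w0 hw0 hcw0
  have hp0 : θ i0 • νs i0 = a0 • ν := hP0 a0 ha0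
  obtain ⟨u1, w1, hu1, hw1, hcw1, hP1⟩ :=
    decomp X hXne A b c ν hc hstar θ νs hθpos hθsum hmem hcomb haff i1
  obtain ⟨⟨a1, ha1nn, ha1⟩, -⟩ := hedge.2.2 u1 hu1 w1 hw1 hcw1
  have hp1 : θ i1 • νs i1 = a1 • ν := hP1 a1 ha1
  have hq0 : νs i0 = ((θ i0)⁻¹ * a0) • ν := by
    have := congrArg (fun v => (θ i0)⁻¹ • v) hp0
    simpa [smul_smul, inv_mul_cancel₀ (hθpos i0).ne'] using this
  have hq1 : νs i1 = ((θ i1)⁻¹ * a1) • ν := by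
    have := congrArg (fun v => (θ i1)⁻¹ • v) hp1
    simpa [smul_smul, inv_mul_cancel₀ (hθpos i1).ne'] using this
  set t0 : ℝ := (θ i0)⁻¹ * a0 with ht0def
  set t1 : ℝ := (θ i1)⁻¹ * a1 with ht1def
  by_cases ht0 : t0 = 0
  · exact hnp i0 i1 hne ⟨0, Or.inl (by rw [hq0, ht0, zero_smul, zero_smul])⟩
  · refine hnp i0 i1 hne ⟨t1 / t0, Or.inr ?_⟩
    rw [hq1, hq0, smul_smul, div_mul_cancel₀ _ ht0]
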